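/- Let c_1,…,c_m be non-negative integers with D_m := ∏_{i=1}^m u_{c_i} ≠ 0, and set y_m := r_{c_1} + Σ_{k=2}^m r_{c_k} ∏_{i=1}^{k−1} u_{c_i}. If D_m > 0, then the supremum of f on the cylinder Δ^E_{c_1…c_m} equals y_m + D_m and is attained at the right endpoint Δ^E_{c_1…c_m(0)}, while the infimum equals y_m and is the value of f at the left endpoint Δ^E_{c_1…c_{m−1}[c_m+1](0)}. If D_m < 0, then the supremum equals y_m, attained at Δ^E_{c_1…c_{m−1}[c_m+1](0)}, and the infimum equals y_m + D_m, attained at Δ^E_{c_1…c_m(0)}. -/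

import Mathlib

open scoped BigOperators

/-- The value `Δ^E_g` of the Engel series with digit sequence `g`
(`g n` is the paper's `g_{n+1}`). -/
noncomputable def engelSum (g : ℕ → ℕ) : ℝ :=
  ∑' n : ℕ, ∏ k ∈ Finset.range (n + 1),
    ((2 : ℝ) + ∑ i ∈ Finset.range (k + 1), (g i : ℝ))⁻¹

/-- The value of the series `r_{g_1} + ∑_{k≥2} r_{g_k} ∏_{i=1}^{k-1} u_{g_i}`
defining `f` on the digit sequence `g`. -/
noncomputable def fSeries (u r : ℕ → ℝ) (g : ℕ → ℕ) : ℝ :=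
  r (g 0) + ∑' k : ℕ, r (g (k + 1)) * ∏ i ∈ Finset.range (k + 1), u (g i)

/-- `rpred r n = r (n-1)`, with the convention `r (-1) = 1`. -/
noncomputable def rpred (r : ℕ → ℝ) (n : ℕ) : ℝ := if n = 0 then 1 else r (n - 1)


lemma engel_term_pos (g : ℕ → ℕ) (n : ℕ) :
    0 < ∏ k ∈ Finset.range (n + 1),
      ((2 : ℝ) + ∑ i ∈ Finset.range (k + 1), (g i : ℝ))⁻¹ := by
  apply Finset.prod_pos
  intro k _
  have h2 : (0:ℝ) < 2 + ∑ i ∈ Finset.range (k + 1), (g i : ℝ) := by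
    have : (0:ℝ) ≤ ∑ i ∈ Finset.range (k + 1), (g i : ℝ) :=
      Finset.sum_nonneg fun i _ => Nat.cast_nonneg _
    linarith
  exact inv_pos.mpr h2

lemma engel_term_le (g : ℕ → ℕ) (n : ℕ) :
    ∏ k ∈ Finset.range (n + 1),
      ((2 : ℝ) + ∑ i ∈ Finset.range (k + 1), (g i : ℝ))⁻¹ ≤ (1/2)^(n+1) := by
  have : ∀ k ∈ Finset.range (n+1),
      ((2 : ℝ) + ∑ i ∈ Finset.range (k + 1), (g i : ℝ))⁻¹ ≤ 1/2 := by
    intro k _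
    have hs : (0:ℝ) ≤ ∑ i ∈ Finset.range (k + 1), (g i : ℝ) :=
      Finset.sum_nonneg fun i _ => Nat.cast_nonneg _
    rw [show (1/2 : ℝ) = (2:ℝ)⁻¹ by norm_num]
    apply inv_anti₀ <;> linarith
  calc ∏ k ∈ Finset.range (n + 1),
      ((2 : ℝ) + ∑ i ∈ Finset.range (k + 1), (g i : ℝ))⁻¹
      ≤ ∏ k ∈ Finset.range (n + 1), (1/2 : ℝ) := by
        apply Finset.prod_le_prod
        · intro k _
          exact le_of_lt (inv_pos.mpr (by positivity))
        · exact this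
    _ = (1/2)^(n+1) := by rw [Finset.prod_const, Finset.card_range]

lemma engel_summable (g : ℕ → ℕ) :
    Summable (fun n => ∏ k ∈ Finset.range (n + 1),
      ((2 : ℝ) + ∑ i ∈ Finset.range (k + 1), (g i : ℝ))⁻¹) := by
  apply Summable.of_nonneg_of_le (fun n => (engel_term_pos g n).le) (engel_term_le g)
  have : Summable (fun n : ℕ => (1/2 : ℝ)^n * (1/2)) :=
    (summable_geometric_of_lt_one (by norm_num : (0:ℝ) ≤ 1/2) (by norm_num)).mul_right _
  exact this.congr (fun n => by rw [pow_succ])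

lemma engel_mem (g : ℕ → ℕ) : engelSum g ∈ Set.Ioc (0:ℝ) 1 := by
  constructor
  · exact Summable.tsum_pos (engel_summable g) (fun n => (engel_term_pos g n).le) 0 (engel_term_pos g 0)
  · have h1 : Summable (fun n : ℕ => (1/2 : ℝ)^(n+1)) := by
      exact ((summable_geometric_of_lt_one (by norm_num : (0:ℝ) ≤ 1/2) (by norm_num)).mul_right (1/2)).congr
        (fun n => by rw [pow_succ])
    have := Summable.tsum_le_tsum (engel_term_le g) (engel_summable g) h1
    have h2 : ∑' n : ℕ, (1/2 : ℝ)^(n+1) = 1 := by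
      have : ∑' n : ℕ, (1/2 : ℝ)^(n+1) = (1/2) * ∑' n : ℕ, (1/2 : ℝ)^n := by
        rw [← tsum_mul_left]
        exact tsum_congr fun n => by rw [pow_succ]; ring
      rw [this, tsum_geometric_of_lt_one (by norm_num : (0:ℝ) ≤ 1/2) (by norm_num)]
      norm_num
    rw [h2] at this
    exact this


section aux
variable (u r : ℕ → ℝ) (M : ℝ) (hM0 : 0 ≤ M) (hM1 : M < 1)
  (hMu : ∀ n, |u n| ≤ M) (hr1 : ∀ n, |r n| ≤ 1)
include hM0 hM1 hMu hr1

lemma term_abs_le (g : ℕ → ℕ) (k : ℕ) :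
    |r (g (k + 1)) * ∏ i ∈ Finset.range (k + 1), u (g i)| ≤ M ^ (k+1) := by
  rw [abs_mul, Finset.abs_prod]
  calc |r (g (k+1))| * ∏ i ∈ Finset.range (k + 1), |u (g i)|
      ≤ 1 * ∏ i ∈ Finset.range (k + 1), M := by
        apply mul_le_mul (hr1 _)
        · exact Finset.prod_le_prod (fun i _ => abs_nonneg _) (fun i _ => hMu _)
        · exact Finset.prod_nonneg fun i _ => abs_nonneg _
        · norm_num
    _ = M ^ (k+1) := by rw [one_mul, Finset.prod_const, Finset.card_range]

lemma summable_fterms (g : ℕ → ℕ) :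
    Summable (fun k => r (g (k + 1)) * ∏ i ∈ Finset.range (k + 1), u (g i)) := by
  apply Summable.of_abs
  apply Summable.of_nonneg_of_le (fun k => abs_nonneg _)
    (term_abs_le u r M hM0 hM1 hMu hr1 g)
  have : Summable (fun k : ℕ => M ^ k * M) :=
    (summable_geometric_of_lt_one hM0 hM1).mul_right _
  exact this.congr fun k => by rw [pow_succ]

lemma fSeries_abs_le (g : ℕ → ℕ) : |fSeries u r g| ≤ 1 + M * (1 - M)⁻¹ := by
  have hsum := summable_fterms u r M hM0 hM1 hMu hr1 g
  have h1 : |∑' k : ℕ, r (g (k + 1)) * ∏ i ∈ Finset.range (k + 1), u (g i)|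
      ≤ M * (1-M)⁻¹ := by
    have hsumM : Summable (fun k : ℕ => M ^ (k+1)) := by
      have : Summable (fun k : ℕ => M ^ k * M) :=
        (summable_geometric_of_lt_one hM0 hM1).mul_right _
      exact this.congr fun k => by rw [pow_succ]
    calc |∑' k : ℕ, r (g (k + 1)) * ∏ i ∈ Finset.range (k + 1), u (g i)|
        = ‖∑' k : ℕ, r (g (k + 1)) * ∏ i ∈ Finset.range (k + 1), u (g i)‖ :=
          (Real.norm_eq_abs _).symm
      _ ≤ ∑' k : ℕ, |r (g (k + 1)) * ∏ i ∈ Finset.range (k + 1), u (g i)| := by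
          have := norm_tsum_le_tsum_norm (f := fun k : ℕ => r (g (k + 1)) * ∏ i ∈ Finset.range (k + 1), u (g i)) (by simp only [Real.norm_eq_abs]; exact hsum.abs)
          simp only [Real.norm_eq_abs] at this
          exact this
      _ ≤ ∑' k : ℕ, M ^ (k+1) :=
          Summable.tsum_le_tsum (term_abs_le u r M hM0 hM1 hMu hr1 g) hsum.abs hsumM
      _ = M * (1-M)⁻¹ := by
          have : ∑' k : ℕ, M ^ (k+1) = M * ∑' k : ℕ, M ^ k := by
            rw [← tsum_mul_left]
            exact tsum_congr fun k => by rw [pow_succ]; ring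
          rw [this, tsum_geometric_of_lt_one hM0 hM1]
  calc |fSeries u r g| ≤ |r (g 0)| + |∑' k : ℕ, r (g (k + 1)) * ∏ i ∈ Finset.range (k + 1), u (g i)| := abs_add_le _ _
    _ ≤ 1 + M * (1-M)⁻¹ := add_le_add (hr1 _) h1

lemma fSeries_rec (g : ℕ → ℕ) :
    fSeries u r g = r (g 0) + u (g 0) * fSeries u r (fun n => g (n + 1)) := by
  have hsum := summable_fterms u r M hM0 hM1 hMu hr1 g
  have hsum' := summable_fterms u r M hM0 hM1 hMu hr1 (fun n => g (n + 1))
  unfold fSeries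
  rw [Summable.tsum_eq_zero_add hsum]
  have h0 : r (g 1) * ∏ i ∈ Finset.range 1, u (g i) = r (g 1) * u (g 0) := by simp
  have hterm : ∀ k : ℕ, r (g (k + 1 + 1)) * ∏ i ∈ Finset.range (k + 1 + 1), u (g i)
      = u (g 0) * (r (g (k + 1 + 1)) * ∏ i ∈ Finset.range (k + 1), u (g (i + 1))) := by
    intro k
    rw [Finset.prod_range_succ' (fun i => u (g i))]
    ring
  rw [tsum_congr hterm, tsum_mul_left]
  rw [Finset.prod_range_one]
  ring
end aux

section aux2
variable (u r : ℕ → ℝ)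

lemma P_succ (g : ℕ → ℕ) (m : ℕ) :
    ∑ k ∈ Finset.range (m+1), r (g k) * ∏ i ∈ Finset.range k, u (g i)
      = r (g 0) + u (g 0) * ∑ k ∈ Finset.range m,
          r (g (k+1)) * ∏ i ∈ Finset.range k, u (g (i+1)) := by
  rw [Finset.sum_range_succ', Finset.mul_sum, Finset.prod_range_zero, mul_one, add_comm]
  congr 1
  apply Finset.sum_congr rfl
  intro k _
  rw [Finset.prod_range_succ']
  ring

lemma D_succ (g : ℕ → ℕ) (m : ℕ) :
    ∏ i ∈ Finset.range (m+1), u (g i) = u (g 0) * ∏ i ∈ Finset.range m, u (g (i+1)) := by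
  rw [Finset.prod_range_succ']
  ring
end aux2

section aux3
variable (u r : ℕ → ℝ) (M : ℝ) (hM0 : 0 ≤ M) (hM1 : M < 1)
  (hMu : ∀ n, |u n| ≤ M) (hr1 : ∀ n, |r n| ≤ 1)
include hM0 hM1 hMu hr1

lemma fSeries_split : ∀ (m : ℕ) (g : ℕ → ℕ),
    fSeries u r g = (∑ k ∈ Finset.range m, r (g k) * ∏ i ∈ Finset.range k, u (g i))
      + (∏ i ∈ Finset.range m, u (g i)) * fSeries u r (fun n => g (n + m)) := by
  intro m
  induction m with
  | zero => intro g; simp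
  | succ m ih =>
    intro g
    rw [fSeries_rec u r M hM0 hM1 hMu hr1 g, ih (fun n => g (n + 1))]
    have hsh : (fun n => g (n + m + 1)) = (fun n => g (n + (m+1))) := by
      funext n; rfl
    rw [P_succ u r g m, D_succ u g m, hsh]
    ring

lemma P_mem (hr01 : ∀ n, 0 < r n ∧ r n < 1) (hru : ∀ n, 0 < r n + u n ∧ r n + u n ≤ 1) :
    ∀ (m : ℕ) (g : ℕ → ℕ) (t : ℝ), 0 ≤ t → t ≤ 1 →
      0 ≤ (∑ k ∈ Finset.range m, r (g k) * ∏ i ∈ Finset.range k, u (g i))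
            + (∏ i ∈ Finset.range m, u (g i)) * t ∧
      (∑ k ∈ Finset.range m, r (g k) * ∏ i ∈ Finset.range k, u (g i))
            + (∏ i ∈ Finset.range m, u (g i)) * t ≤ 1 := by
  intro m
  induction m with
  | zero => intro g t ht0 ht1; simpa using ⟨ht0, ht1⟩
  | succ m ih =>
    intro g t ht0 ht1
    rw [P_succ u r g m, D_succ u g m]
    obtain ⟨hs0, hs1⟩ := ih (fun n => g (n + 1)) t ht0 ht1
    set s := (∑ k ∈ Finset.range m, r (g (k+1)) * ∏ i ∈ Finset.range k, u (g (i+1)))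
      + (∏ i ∈ Finset.range m, u (g (i+1))) * t with hsdef
    have hexpr : r (g 0) + u (g 0) * (∑ k ∈ Finset.range m,
          r (g (k+1)) * ∏ i ∈ Finset.range k, u (g (i+1)))
        + u (g 0) * (∏ i ∈ Finset.range m, u (g (i+1))) * t
        = r (g 0) + u (g 0) * s := by rw [hsdef]; ring
    rw [hexpr]
    obtain ⟨hra, hrb⟩ := hr01 (g 0)
    obtain ⟨hca, hcb⟩ := hru (g 0)
    rcases le_total 0 (u (g 0)) with h | h
    · constructor
      · nlinarith
      · nlinarith
    · constructor
      · nlinarith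
      · nlinarith

lemma fSeries_mem (hr01 : ∀ n, 0 < r n ∧ r n < 1)
    (hru : ∀ n, 0 < r n + u n ∧ r n + u n ≤ 1) (g : ℕ → ℕ) :
    0 ≤ fSeries u r g ∧ fSeries u r g ≤ 1 := by
  set B := 1 + M * (1 - M)⁻¹ with hB
  have key : ∀ m : ℕ, |fSeries u r g
      - ∑ k ∈ Finset.range m, r (g k) * ∏ i ∈ Finset.range k, u (g i)| ≤ B * M ^ m := by
    intro m
    have hs := fSeries_split u r M hM0 hM1 hMu hr1 m g
    have hDle : |∏ i ∈ Finset.range m, u (g i)| ≤ M ^ m := by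
      rw [Finset.abs_prod]
      calc ∏ i ∈ Finset.range m, |u (g i)| ≤ ∏ i ∈ Finset.range m, M :=
            Finset.prod_le_prod (fun i _ => abs_nonneg _) (fun i _ => hMu _)
        _ = M ^ m := by rw [Finset.prod_const, Finset.card_range]
    have : fSeries u r g - ∑ k ∈ Finset.range m, r (g k) * ∏ i ∈ Finset.range k, u (g i)
        = (∏ i ∈ Finset.range m, u (g i)) * fSeries u r (fun n => g (n + m)) := by
      rw [hs]; ring
    rw [this, abs_mul]
    calc |∏ i ∈ Finset.range m, u (g i)| * |fSeries u r (fun n => g (n + m))|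
        ≤ M ^ m * B := by
          apply mul_le_mul hDle (fSeries_abs_le u r M hM0 hM1 hMu hr1 _) (abs_nonneg _)
          exact pow_nonneg hM0 m
      _ = B * M ^ m := mul_comm _ _
  have hlim : Filter.Tendsto (fun m => ∑ k ∈ Finset.range m,
      r (g k) * ∏ i ∈ Finset.range k, u (g i)) Filter.atTop (nhds (fSeries u r g)) := by
    rw [tendsto_iff_dist_tendsto_zero]
    apply squeeze_zero (fun m => dist_nonneg) (fun m => ?_)
      (by simpa using (tendsto_pow_atTop_nhds_zero_of_lt_one hM0 hM1).const_mul B)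
    rw [Real.dist_eq, abs_sub_comm]
    exact key m
  have hmem : fSeries u r g ∈ Set.Icc (0:ℝ) 1 := by
    apply isClosed_Icc.mem_of_tendsto hlim
    apply Filter.Eventually.of_forall
    intro m
    have := P_mem u r M hM0 hM1 hMu hr1 hr01 hru m g 0 le_rfl zero_le_one
    simpa using this
  exact ⟨hmem.1, hmem.2⟩
end aux3

lemma fSeries_zero (u r : ℕ → ℝ) (h0 : |u 0| < 1) (hr0 : r 0 = 1 - u 0) :
    fSeries u r (fun _ => 0) = 1 := by
  unfold fSeries
  have hpr : ∀ k : ℕ, r 0 * ∏ i ∈ Finset.range (k+1), u 0 = (r 0 * u 0) * u 0 ^ k := by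
    intro k
    rw [Finset.prod_const, Finset.card_range, pow_succ]
    ring
  rw [tsum_congr hpr, tsum_mul_left,
    tsum_geometric_of_norm_lt_one (by simpa [Real.norm_eq_abs] using h0)]
  have hne : 1 - u 0 ≠ 0 := by
    intro hc
    have : u 0 = 1 := by linarith
    rw [this] at h0; norm_num at h0
  rw [hr0]
  field_simp
  ring


/-- extrema of f on the cylinder Δ^E_{c₁…c_m}: if D_m > 0 the
supremum is y_m + D_m, attained at the right endpoint Δ^E_{c₁…c_m(0)}, and the
infimum is y_m, the value of f at the left endpoint Δ^E_{c₁…c_{m-1}[c_m+1](0)};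
if D_m < 0 the roles are swapped. -/
theorem stmt9
    (u r : ℕ → ℝ)
    (hu_sum : HasSum u 1)
    (hu_abs : ∀ n, |u n| < 1)
    (hr : ∀ n, r n = 1 - ∑ i ∈ Finset.range (n + 1), u i)
    (hr01 : ∀ n, 0 < r n ∧ r n < 1)
    (G : ℝ → ℕ → ℕ)
    (hG : ∀ x ∈ Set.Ioc (0:ℝ) 1, engelSum (G x) = x)
    (hGuniq : ∀ x ∈ Set.Ioc (0:ℝ) 1, ∀ g : ℕ → ℕ, engelSum g = x → g = G x)
    (f : ℝ → ℝ)
    (hf : ∀ x ∈ Set.Ioc (0:ℝ) 1, f x = fSeries u r (G x))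
    (hf0 : f 0 = 0)
    (m : ℕ) (hm : 1 ≤ m) (c : ℕ → ℕ)
    (C : Set ℝ) (hC : C = {x | x ∈ Set.Ioc (0:ℝ) 1 ∧ ∀ i < m, G x i = c i})
    (bpt : ℝ) (hbpt : bpt = engelSum (fun n => if n < m then c n else 0))
    (apt : ℝ) (hapt : apt = engelSum
      (fun n => if n < m - 1 then c n else if n = m - 1 then c (m - 1) + 1 else 0))
    (y : ℝ) (hy : y = r (c 0) + ∑ k ∈ Finset.Ico 1 m,
      r (c k) * ∏ i ∈ Finset.range k, u (c i))
    (D : ℝ) (hD : D = ∏ i ∈ Finset.range m, u (c i)) (hD0 : D ≠ 0) :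
    bpt ∈ C ∧ f bpt = y + D ∧ f apt = y ∧
    (0 < D → IsGreatest (f '' C) (y + D) ∧ IsGLB (f '' C) y) ∧
    (D < 0 → IsLeast (f '' C) (y + D) ∧ IsLUB (f '' C) y) := by
  -- basic bounds
  have hr1 : ∀ n, |r n| ≤ 1 := by
    intro n
    rw [abs_le]
    exact ⟨by linarith [(hr01 n).1], (hr01 n).2.le⟩
  -- uniform bound M on |u n|
  obtain ⟨N, hN⟩ : ∃ N, ∀ n ≥ N, |u n| ≤ 1/2 := by
    have h := hu_sum.summable.tendsto_atTop_zero
    rw [Metric.tendsto_atTop] at h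
    obtain ⟨N, hN⟩ := h (1/2) (by norm_num)
    refine ⟨N, fun n hn => ?_⟩
    have := hN n hn
    rw [Real.dist_eq, sub_zero] at this
    linarith
  set M : ℝ := (Finset.range (N+1)).sup'
    (Finset.nonempty_range_iff.mpr (Nat.succ_ne_zero N)) (fun n => max (1/2) |u n|)
    with hMdef
  have hM_half : (1/2:ℝ) ≤ M := by
    have h0 : (0:ℕ) ∈ Finset.range (N+1) := by simp
    exact le_trans (le_max_left _ _) (Finset.le_sup' (fun n => max (1/2) |u n|) h0)
  have hM0 : (0:ℝ) ≤ M := by linarith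
  have hM1 : M < 1 := by
    rw [hMdef, Finset.sup'_lt_iff]
    intro n _
    exact max_lt (by norm_num) (hu_abs n)
  have hMu : ∀ n, |u n| ≤ M := by
    intro n
    by_cases hn : n ≤ N
    · exact le_trans (le_max_right _ _)
        (Finset.le_sup' (fun n => max (1/2) |u n|) (Finset.mem_range.mpr (by omega)))
    · exact le_trans (hN n (by omega)) hM_half
  -- identities for r
  have hrs : ∀ n, r (n+1) + u (n+1) = r n := by
    intro n
    rw [hr n, hr (n+1), Finset.sum_range_succ]
    ring
  have hr0u : r 0 = 1 - u 0 := by rw [hr 0]; simp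
  have hru : ∀ n, 0 < r n + u n ∧ r n + u n ≤ 1 := by
    intro n
    cases n with
    | zero =>
      constructor
      · rw [hr0u]; norm_num
      · rw [hr0u]; norm_num
    | succ n =>
      rw [hrs n]
      exact ⟨(hr01 n).1, (hr01 n).2.le⟩
  have hSmem : ∀ g : ℕ → ℕ, 0 ≤ fSeries u r g ∧ fSeries u r g ≤ 1 :=
    fSeries_mem u r M hM0 hM1 hMu hr1 hr01 hru
  have hsplit := fSeries_split u r M hM0 hM1 hMu hr1
  have hfz : fSeries u r (fun _ => 0) = 1 := fSeries_zero u r (hu_abs 0) hr0u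
  have hsingle : ∀ j : ℕ, fSeries u r (fun k => if k = 0 then j else 0) = r j + u j := by
    intro j
    rw [fSeries_rec u r M hM0 hM1 hMu hr1]
    have h1 : (fun n => if n + 1 = 0 then j else 0) = (fun _ : ℕ => (0:ℕ)) := by
      funext n; simp
    rw [h1, hfz]
    simp
  -- y = partial sum over range m
  have hyP : y = ∑ k ∈ Finset.range m, r (c k) * ∏ i ∈ Finset.range k, u (c i) := by
    rw [hy, Finset.range_eq_Ico, Finset.sum_eq_sum_Ico_succ_bot hm]
    simp
  -- bpt
  set gb : ℕ → ℕ := fun n => if n < m then c n else 0 with hgb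
  have hbmem : bpt ∈ Set.Ioc (0:ℝ) 1 := hbpt ▸ engel_mem gb
  have hGb : G bpt = gb := (hGuniq bpt hbmem gb hbpt.symm).symm
  have hbC : bpt ∈ C := by
    rw [hC]
    exact ⟨hbmem, fun i hi => by rw [hGb]; simp [hgb, hi]⟩
  -- value of f on C
  have hfx : ∀ x ∈ C, f x = y + D * fSeries u r (fun n => G x (n + m)) := by
    intro x hx
    rw [hC] at hx
    rw [hf x hx.1, hsplit m (G x)]
    have h2 : ∀ k ∈ Finset.range m,
        r (G x k) * ∏ i ∈ Finset.range k, u (G x i)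
          = r (c k) * ∏ i ∈ Finset.range k, u (c i) := by
      intro k hk
      have hkm := Finset.mem_range.mp hk
      rw [hx.2 k hkm]
      congr 1
      apply Finset.prod_congr rfl
      intro i hi
      rw [hx.2 i (lt_trans (Finset.mem_range.mp hi) hkm)]
    have h3 : ∏ i ∈ Finset.range m, u (G x i) = D := by
      rw [hD]
      exact Finset.prod_congr rfl fun i hi => by rw [hx.2 i (Finset.mem_range.mp hi)]
    rw [Finset.sum_congr rfl h2, h3, ← hyP]
  -- f bpt = y + D
  have hfb : f bpt = y + D := by
    rw [hfx bpt hbC]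
    have h1 : (fun n => G bpt (n + m)) = (fun _ : ℕ => (0:ℕ)) := by
      funext n
      rw [hGb]
      simp only [hgb]
      rw [if_neg (by omega)]
    rw [h1, hfz, mul_one]
  -- f apt = y
  set ga : ℕ → ℕ := fun n => if n < m - 1 then c n
    else if n = m - 1 then c (m - 1) + 1 else 0 with hga
  have hamem : apt ∈ Set.Ioc (0:ℝ) 1 := hapt ▸ engel_mem ga
  have hGa : G apt = ga := (hGuniq apt hamem ga hapt.symm).symm
  have hm1 : m - 1 + 1 = m := Nat.succ_pred_eq_of_pos hm
  have hfa : f apt = y := by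
    rw [hf apt hamem, hGa, hsplit (m-1) ga]
    have hsh : (fun n => ga (n + (m-1)))
        = (fun k => if k = 0 then c (m-1) + 1 else 0) := by
      funext n
      simp only [hga]
      rcases Nat.eq_zero_or_pos n with h | h
      · subst h; rw [if_neg (by omega), if_pos (by omega)]; simp
      · rw [if_neg (by omega), if_neg (by omega), if_neg (by omega)]
    rw [hsh, hsingle, hrs (c (m-1))]
    have h2 : ∀ k ∈ Finset.range (m-1),
        r (ga k) * ∏ i ∈ Finset.range k, u (ga i)
          = r (c k) * ∏ i ∈ Finset.range k, u (c i) := by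
      intro k hk
      have hkm := Finset.mem_range.mp hk
      simp only [hga]
      rw [if_pos hkm]
      congr 1
      apply Finset.prod_congr rfl
      intro i hi
      rw [if_pos (lt_trans (Finset.mem_range.mp hi) hkm)]
    have h3 : ∏ i ∈ Finset.range (m-1), u (ga i)
        = ∏ i ∈ Finset.range (m-1), u (c i) := by
      apply Finset.prod_congr rfl
      intro i hi
      simp only [hga]
      rw [if_pos (Finset.mem_range.mp hi)]
    rw [Finset.sum_congr rfl h2, h3, hyP, ← hm1, Finset.sum_range_succ, hm1]
    ring
  -- approach points
  set gn : ℕ → ℕ → ℕ := fun n k => if k < m then c k else if k = m then n else 0 with hgn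
  have hxnC : ∀ n : ℕ, engelSum (gn n) ∈ C := by
    intro n
    have hmem := engel_mem (gn n)
    have hGn : G (engelSum (gn n)) = gn n := (hGuniq _ hmem _ rfl).symm
    rw [hC]
    exact ⟨hmem, fun i hi => by rw [hGn]; simp only [hgn]; rw [if_pos hi]⟩
  have hfxn : ∀ n : ℕ, f (engelSum (gn n)) = y + D * (r n + u n) := by
    intro n
    rw [hfx _ (hxnC n)]
    have hGn : G (engelSum (gn n)) = gn n :=
      (hGuniq _ (engel_mem (gn n)) _ rfl).symm
    have h1 : (fun k => G (engelSum (gn n)) (k + m))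
        = (fun k => if k = 0 then n else 0) := by
      funext k
      rw [hGn]
      simp only [hgn]
      rcases Nat.eq_zero_or_pos k with h | h
      · subst h; rw [if_neg (by omega), if_pos (by omega)]; simp
      · rw [if_neg (by omega), if_neg (by omega), if_neg (by omega)]
    rw [h1, hsingle]
  -- the limit y
  have hrlim : Filter.Tendsto r Filter.atTop (nhds 0) := by
    have hpart := hu_sum.tendsto_sum_nat
    have h1 : Filter.Tendsto (fun n => ∑ i ∈ Finset.range (n+1), u i)
        Filter.atTop (nhds 1) := hpart.comp (Filter.tendsto_add_atTop_nat 1)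
    have h2 : Filter.Tendsto (fun n => 1 - ∑ i ∈ Finset.range (n+1), u i)
        Filter.atTop (nhds 0) := by
      have := (tendsto_const_nhds (x := (1:ℝ)) (f := Filter.atTop)).sub h1
      simpa using this
    refine h2.congr fun n => ?_
    rw [← hr n]
  have hulim : Filter.Tendsto u Filter.atTop (nhds 0) :=
    hu_sum.summable.tendsto_atTop_zero
  have htend : Filter.Tendsto (fun n => y + D * (r n + u n)) Filter.atTop (nhds y) := by
    have h1 : Filter.Tendsto (fun n => r n + u n) Filter.atTop (nhds 0) := by
      simpa using hrlim.add hulim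
    have h2 := (h1.const_mul D).const_add y
    simpa using h2
  refine ⟨hbC, hfb, hfa, ?_, ?_⟩
  · -- D > 0
    intro hDpos
    constructor
    · constructor
      · exact ⟨bpt, hbC, by rw [hfb]⟩
      · rintro z ⟨x, hx, rfl⟩
        rw [hfx x hx]
        nlinarith [(hSmem (fun n => G x (n + m))).2]
    · constructor
      · rintro z ⟨x, hx, rfl⟩
        rw [hfx x hx]
        nlinarith [(hSmem (fun n => G x (n + m))).1]
      · intro b hb
        refine ge_of_tendsto htend ?_
        apply Filter.Eventually.of_forall
        intro n
        have : f (engelSum (gn n)) ∈ f '' C := ⟨_, hxnC n, rfl⟩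
        have hle := hb this
        rw [hfxn n] at hle
        exact hle
  · -- D < 0
    intro hDneg
    constructor
    · constructor
      · exact ⟨bpt, hbC, by rw [hfb]⟩
      · rintro z ⟨x, hx, rfl⟩
        rw [hfx x hx]
        nlinarith [(hSmem (fun n => G x (n + m))).2]
    · constructor
      · rintro z ⟨x, hx, rfl⟩
        rw [hfx x hx]
        nlinarith [(hSmem (fun n => G x (n + m))).1]
      · intro b hb
        refine le_of_tendsto htend ?_
        apply Filter.Eventually.of_forall
        intro n
        have : f (engelSum (gn n)) ∈ f '' C := ⟨_, hxnC n, rfl⟩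
        have hle := hb this
        rw [hfxn n] at hle
        exact hle
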